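/- For all a, b ∈ 𝒜 one has exp(a+b)·exp(−a) = Σ_{n=0}^{∞} ∫_{0 ≤ t₁ ≤ ⋯ ≤ tₙ ≤ 1} B(t₁) B(t₂) ⋯ B(tₙ) dt₁⋯dtₙ, where B(t) = exp(ta)·b·exp(−ta), the n = 0 term is 1, each integral is a Bochner integral over the n-simplex, and the series converges absolutely in norm. (This is the expansional formula (expansional) used in the proof of Theorem 2.4.) -/

import Mathlib

open MeasureTheory NormedSpace Nat

noncomputable instance stmt14RatAlg {𝒜 : Type*} [NormedRing 𝒜] [NormedAlgebra ℂ 𝒜] :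
    NormedAlgebra ℚ 𝒜 := NormedAlgebra.restrictScalars ℚ ℂ 𝒜

section Stmt14Aux
variable {𝒜 : Type*} [NormedRing 𝒜] [NormedAlgebra ℂ 𝒜] [CompleteSpace 𝒜]

noncomputable def BB (a b : 𝒜) (u : ℝ) : 𝒜 :=
  NormedSpace.exp (u • a) * b * NormedSpace.exp (-u • a)

lemma continuous_BB (a b : 𝒜) : Continuous (BB a b) := by
  unfold BB
  exact ((exp_continuous.comp (continuous_id.smul continuous_const)).mul continuous_const).mul
    (exp_continuous.comp ((continuous_id.neg).smul continuous_const))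

lemma norm_exp_le' (x : 𝒜) : ‖exp x‖ ≤ max ‖(1 : 𝒜)‖ 1 * Real.exp ‖x‖ := by
  have hsum : Summable fun n : ℕ => ‖((n ! : ℝ))⁻¹ • x ^ n‖ := by
    have := NormedSpace.norm_expSeries_summable (𝕂 := ℝ) x
    simpa [NormedSpace.expSeries_apply_eq] using this
  have hexp : Real.exp ‖x‖ = ∑' n : ℕ, ‖x‖ ^ n / n ! := by
    rw [Real.exp_eq_exp_ℝ, exp_eq_tsum ℝ]
    exact tsum_congr fun n => by rw [smul_eq_mul, inv_mul_eq_div]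
  have hg : Summable fun n : ℕ => max ‖(1 : 𝒜)‖ 1 * (‖x‖ ^ n / n !) :=
    (Real.summable_pow_div_factorial ‖x‖).mul_left _
  rw [exp_eq_tsum ℝ]
  refine (norm_tsum_le_tsum_norm hsum).trans ?_
  have key : ∀ n : ℕ, ‖((n ! : ℝ))⁻¹ • x ^ n‖ ≤ max ‖(1 : 𝒜)‖ 1 * (‖x‖ ^ n / n !) := by
    intro n
    rw [norm_smul, Real.norm_eq_abs, abs_inv, Nat.abs_cast]
    cases n with
    | zero => simp [le_max_left]
    | succ m =>
      have h1 : ‖x ^ (m + 1)‖ ≤ ‖x‖ ^ (m + 1) := norm_pow_le' x m.succ_pos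
      have h2 : (0 : ℝ) < ((m + 1)! : ℝ) := by positivity
      calc ((m+1)! : ℝ)⁻¹ * ‖x ^ (m+1)‖ ≤ ((m+1)! : ℝ)⁻¹ * ‖x‖ ^ (m+1) := by
            gcongr
        _ = ‖x‖ ^ (m+1) / (m+1)! := by rw [inv_mul_eq_div]
        _ ≤ max ‖(1 : 𝒜)‖ 1 * (‖x‖ ^ (m+1) / (m+1)!) := by
            nth_rewrite 1 [← one_mul (‖x‖ ^ (m+1) / ((m+1)! : ℝ))]
            have hle : (1:ℝ) ≤ max ‖(1 : 𝒜)‖ 1 := le_max_right _ _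
            have hnn : (0:ℝ) ≤ ‖x‖ ^ (m+1) / ((m+1)! : ℝ) := by positivity
            exact mul_le_mul_of_nonneg_right hle hnn
  calc ∑' n : ℕ, ‖((n ! : ℝ))⁻¹ • x ^ n‖ ≤ ∑' n : ℕ, max ‖(1 : 𝒜)‖ 1 * (‖x‖ ^ n / n !) :=
        Summable.tsum_le_tsum key hsum hg
    _ = max ‖(1 : 𝒜)‖ 1 * ∑' n : ℕ, ‖x‖ ^ n / n ! := tsum_mul_left
    _ = max ‖(1 : 𝒜)‖ 1 * Real.exp ‖x‖ := by rw [hexp]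

/-- uniform bound for `BB` on `[0,1]` -/
noncomputable def MM (a b : 𝒜) : ℝ :=
  (max ‖(1 : 𝒜)‖ 1 * Real.exp ‖a‖) * ‖b‖ * (max ‖(1 : 𝒜)‖ 1 * Real.exp ‖a‖)

lemma MM_nonneg (a b : 𝒜) : 0 ≤ MM a b := by
  unfold MM
  positivity

lemma norm_BB_le (a b : 𝒜) {u : ℝ} (h0 : 0 ≤ u) (h1 : u ≤ 1) : ‖BB a b u‖ ≤ MM a b := by
  have key : ∀ y : 𝒜, ‖y‖ ≤ ‖a‖ → ‖exp y‖ ≤ max ‖(1 : 𝒜)‖ 1 * Real.exp ‖a‖ := by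
    intro y hy
    refine (norm_exp_le' y).trans ?_
    have := Real.exp_le_exp.2 hy
    gcongr
  have hu : ‖u • a‖ ≤ ‖a‖ := by
    rw [norm_smul, Real.norm_eq_abs, abs_of_nonneg h0]
    nth_rewrite 2 [← one_mul ‖a‖]
    gcongr
  have hu' : ‖-u • a‖ ≤ ‖a‖ := by rw [neg_smul, norm_neg]; exact hu
  calc ‖BB a b u‖ ≤ ‖exp (u • a) * b‖ * ‖exp (-u • a)‖ := norm_mul_le _ _
    _ ≤ ‖exp (u • a)‖ * ‖b‖ * ‖exp (-u • a)‖ := by gcongr; exact norm_mul_le _ _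
    _ ≤ (max ‖(1 : 𝒜)‖ 1 * Real.exp ‖a‖) * ‖b‖ * (max ‖(1 : 𝒜)‖ 1 * Real.exp ‖a‖) := by
        gcongr ?_ * ‖b‖ * ?_
        · exact key _ hu
        · exact key _ hu'
    _ = MM a b := rfl

end Stmt14Aux

section Chunk2
variable {𝒜 : Type*} [NormedRing 𝒜] [NormedAlgebra ℂ 𝒜] [CompleteSpace 𝒜]

def SS (n : ℕ) (s : ℝ) : Set (Fin n → ℝ) := {t | Monotone t ∧ ∀ i, t i ∈ Set.Icc (0:ℝ) s}

lemma isClosed_SS (n : ℕ) (s : ℝ) : IsClosed (SS n s) := by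
  have h1 : SS n s = {t : Fin n → ℝ | Monotone t} ∩ ⋂ i, {t | t i ∈ Set.Icc (0:ℝ) s} := by
    ext t; simp [SS, Set.mem_iInter]
  rw [h1]
  refine IsClosed.inter ?_ (isClosed_iInter fun i =>
    (isClosed_Icc.preimage (continuous_apply i)))
  have h2 : {t : Fin n → ℝ | Monotone t} = ⋂ (i : Fin n) (j : Fin n), {t | i ≤ j → t i ≤ t j} := by
    ext t
    simp only [Set.mem_iInter, Set.mem_setOf_eq]
    exact ⟨fun h i j hij => h hij, fun h i j hij => h i j hij⟩
  rw [h2]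
  refine isClosed_iInter fun i => isClosed_iInter fun j => ?_
  by_cases hij : i ≤ j
  · have : {t : Fin n → ℝ | i ≤ j → t i ≤ t j} = {t | t i ≤ t j} := by
      ext t; simp [hij]
    rw [this]
    exact isClosed_le (continuous_apply i) (continuous_apply j)
  · have : {t : Fin n → ℝ | i ≤ j → t i ≤ t j} = Set.univ := by
      ext t; simp [hij]
    rw [this]; exact isClosed_univ

lemma isCompact_SS (n : ℕ) (s : ℝ) : IsCompact (SS n s) := by
  refine IsCompact.of_isClosed_subset
    (isCompact_univ_pi fun _ : Fin n => (isCompact_Icc (a := (0:ℝ)) (b := s)))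
    (isClosed_SS n s) ?_
  intro t ht
  exact Set.mem_univ_pi.2 ht.2

noncomputable def ff (a b : 𝒜) (n : ℕ) (t : Fin n → ℝ) : 𝒜 :=
  (List.ofFn fun i => BB a b (t i)).prod

lemma continuous_ff (a b : 𝒜) (n : ℕ) : Continuous (ff a b n) := by
  have h : ff a b n = fun t => ((List.finRange n).map fun i => BB a b (t i)).prod := by
    funext t; rw [ff, List.ofFn_eq_map]
  rw [h]
  exact continuous_list_prod _ fun i _ => (continuous_BB a b).comp (continuous_apply i)

lemma integrableOn_ff (a b : 𝒜) (n : ℕ) (s : ℝ) :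
    IntegrableOn (ff a b n) (SS n s) volume :=
  (continuous_ff a b n).continuousOn.integrableOn_compact (isCompact_SS n s)

noncomputable def GG (a b : 𝒜) (n : ℕ) (s : ℝ) : 𝒜 := ∫ t in SS n s, ff a b n t

lemma SS_zero (s : ℝ) : SS 0 s = Set.univ := by
  ext t
  simp only [SS, Set.mem_setOf_eq, Set.mem_univ, iff_true]
  exact ⟨fun i => isEmptyElim i, fun i => isEmptyElim i⟩

lemma GG_zero (a b : 𝒜) (s : ℝ) : GG a b 0 s = 1 := by
  rw [GG, SS_zero, Measure.restrict_univ]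
  have h1 : ∀ t : Fin 0 → ℝ, ff a b 0 t = 1 := fun t => by simp [ff]
  simp only [h1]
  rw [integral_const]
  have h2 : (volume (Set.univ : Set (Fin 0 → ℝ))) = 1 := by
    simp [volume_pi, Measure.pi_univ]
  simp [Measure.real, h2]

noncomputable def HH (a b : 𝒜) : ℕ → ℝ → 𝒜
  | 0 => fun _ => 1
  | n+1 => fun s => ∫ u in (0:ℝ)..s, HH a b n u * BB a b u

lemma continuous_HH (a b : 𝒜) (n : ℕ) : Continuous (HH a b n) := by
  induction n with
  | zero => exact continuous_const
  | succ n ih =>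
    exact intervalIntegral.continuous_primitive
      (fun c d => ((ih.mul (continuous_BB a b)).intervalIntegrable c d)) 0

lemma key_est (a b : 𝒜) {g : ℝ → 𝒜} {c : ℝ} (hc : 0 ≤ c) (n : ℕ)
    (hg : ∀ u ∈ Set.Icc (0:ℝ) 1, ‖g u‖ ≤ c * (MM a b * u) ^ n / n !)
    (hgc : Continuous g) {s : ℝ} (hs : s ∈ Set.Icc (0:ℝ) 1) :
    ‖∫ u in (0:ℝ)..s, g u * BB a b u‖ ≤ c * (MM a b * s) ^ (n+1) / (n+1)! := by
  obtain ⟨hs0, hs1⟩ := hs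
  have hM := MM_nonneg a b
  have hfact : (0:ℝ) < (n ! : ℝ) := by positivity
  have hbound : ‖∫ u in (0:ℝ)..s, g u * BB a b u‖ ≤
      |∫ u in (0:ℝ)..s, (c * MM a b ^ (n+1) / n !) * u ^ n| := by
    refine intervalIntegral.norm_integral_le_abs_of_norm_le ?_ ?_
    · refine (ae_restrict_iff' measurableSet_uIoc).2 (Filter.Eventually.of_forall ?_)
      intro u hu
      rw [Set.uIoc_of_le hs0] at hu
      obtain ⟨hu0, hus⟩ := hu
      have hu1 : u ≤ 1 := hus.trans hs1
      calc ‖g u * BB a b u‖ ≤ ‖g u‖ * ‖BB a b u‖ := norm_mul_le _ _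
        _ ≤ (c * (MM a b * u) ^ n / n !) * MM a b := by
            refine mul_le_mul (hg u ⟨hu0.le, hu1⟩) (norm_BB_le a b hu0.le hu1)
              (norm_nonneg _) (by positivity)
        _ = (c * MM a b ^ (n+1) / n !) * u ^ n := by
            rw [mul_pow]; field_simp; ring
    · exact (continuous_const.mul (continuous_pow n)).intervalIntegrable 0 s
  have hval : (∫ u in (0:ℝ)..s, (c * MM a b ^ (n+1) / n !) * u ^ n)
      = c * (MM a b * s) ^ (n+1) / (n+1)! := by
    rw [intervalIntegral.integral_const_mul, integral_pow]
    have h2 : (((n+1)! : ℕ) : ℝ) = (n+1) * (n ! : ℝ) := by exact_mod_cast Nat.factorial_succ n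
    rw [mul_pow, h2]
    field_simp
    ring
  rw [hval] at hbound
  refine hbound.trans (le_of_eq (abs_of_nonneg ?_))
  positivity

end Chunk2

section Chunk3
variable {𝒜 : Type*} [NormedRing 𝒜] [NormedAlgebra ℂ 𝒜] [CompleteSpace 𝒜]

lemma norm_HH_le (a b : 𝒜) (n : ℕ) :
    ∀ s ∈ Set.Icc (0:ℝ) 1, ‖HH a b n s‖ ≤ ‖(1:𝒜)‖ * (MM a b * s) ^ n / n ! := by
  induction n with
  | zero => intro s _; simp [HH]
  | succ n ih =>
    intro s hs
    exact key_est a b (norm_nonneg _) n ih (continuous_HH a b n) hs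

noncomputable def FF (a b : 𝒜) (s : ℝ) : 𝒜 :=
  NormedSpace.exp (s • (a + b)) * NormedSpace.exp (-s • a)

lemma continuous_FF (a b : 𝒜) : Continuous (FF a b) := by
  unfold FF
  exact (exp_continuous.comp (continuous_id.smul continuous_const)).mul
    (exp_continuous.comp ((continuous_id.neg).smul continuous_const))

lemma exp_neg_mul_exp (a : 𝒜) (s : ℝ) :
    NormedSpace.exp (-s • a) * NormedSpace.exp (s • a) = 1 := by
  rw [← exp_add_of_commute (((Commute.refl a).smul_left (-s)).smul_right s)]
  rw [neg_smul, neg_add_cancel, exp_zero]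

lemma hasDerivAt_FF (a b : 𝒜) (s : ℝ) :
    HasDerivAt (FF a b) (FF a b s * BB a b s) s := by
  have hre : (NormedSpace.exp : 𝒜 → 𝒜) = NormedSpace.exp := rfl
  have d1 : HasDerivAt (fun u : ℝ => exp (u • (a + b))) (exp (s • (a + b)) * (a + b)) s :=
    hasDerivAt_exp_smul_const (a + b) s
  have d2 : HasDerivAt (fun u : ℝ => exp (-u • a)) ((-1 : ℝ) • (exp (-s • a) * a)) s := by
    have h1 : HasDerivAt (fun v : ℝ => exp (v • a)) (exp (-s • a) * a) (-s) :=
      hasDerivAt_exp_smul_const a (-s)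
    have h2 : HasDerivAt (fun u : ℝ => -u) (-1 : ℝ) s := (hasDerivAt_id s).neg
    have h3 := HasDerivAt.scomp s h1 h2
    have h4 : ((fun v : ℝ => exp (v • a)) ∘ fun u : ℝ => -u) = fun u : ℝ => exp (-u • a) :=
      rfl
    rw [h4] at h3
    simpa using h3
  have dF := d1.mul d2
  have hFF : FF a b = fun u : ℝ => exp (u • (a + b)) * exp (-u • a) := by
    funext u; rw [FF, hre]
  rw [hFF]
  convert dF using 1
  · rfl
  -- algebra
  have hy : exp (-s • a) * exp (s • a) = 1 := by
    rw [← hre]; exact exp_neg_mul_exp a s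
  have hc : exp (-s • a) * a = a * exp (-s • a) :=
    (((Commute.refl a).smul_left (-s)).exp_left).eq
  have hBB : BB a b s = exp (s • a) * b * exp (-s • a) := by rw [BB, hre]
  have hFFs : FF a b s = exp (s • (a + b)) * exp (-s • a) := by rw [FF, hre]
  rw [hBB]
  set x := exp (s • (a + b))
  set y := exp (-s • a)
  set e := exp (s • a)
  calc x * y * (e * b * y) = x * (y * e) * (b * y) := by noncomm_ring
    _ = x * (b * y) := by rw [hy]; noncomm_ring
    _ = x * (a + b) * y + x * ((-1 : ℝ) • (y * a)) := by
        rw [hc]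
        simp only [neg_one_smul]
        noncomm_ring

lemma FF_zero (a b : 𝒜) : FF a b 0 = 1 := by
  simp [FF, exp_zero]

lemma FF_eq (a b : 𝒜) {s : ℝ} (hs : 0 ≤ s) :
    FF a b s = 1 + ∫ u in (0:ℝ)..s, FF a b u * BB a b u := by
  have h := intervalIntegral.integral_eq_sub_of_hasDerivAt
    (f := FF a b) (f' := fun u => FF a b u * BB a b u)
    (fun u _ => hasDerivAt_FF a b u)
    (((continuous_FF a b).mul (continuous_BB a b)).intervalIntegrable 0 s)
  rw [h, FF_zero]
  abel

end Chunk3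

section Chunk4
variable {𝒜 : Type*} [NormedRing 𝒜] [NormedAlgebra ℂ 𝒜] [CompleteSpace 𝒜]

noncomputable def CC (a b : 𝒜) : ℝ :=
  (max ‖(1 : 𝒜)‖ 1 * Real.exp ‖a + b‖) * (max ‖(1 : 𝒜)‖ 1 * Real.exp ‖a‖)

lemma CC_nonneg (a b : 𝒜) : 0 ≤ CC a b := by unfold CC; positivity

lemma norm_FF_le (a b : 𝒜) {s : ℝ} (h0 : 0 ≤ s) (h1 : s ≤ 1) : ‖FF a b s‖ ≤ CC a b := by
  have key : ∀ y : 𝒜, ‖y‖ ≤ ‖a + b‖ → ‖exp y‖ ≤ max ‖(1 : 𝒜)‖ 1 * Real.exp ‖a + b‖ := by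
    intro y hy
    refine (norm_exp_le' y).trans ?_
    have := Real.exp_le_exp.2 hy
    gcongr
  have key2 : ∀ y : 𝒜, ‖y‖ ≤ ‖a‖ → ‖exp y‖ ≤ max ‖(1 : 𝒜)‖ 1 * Real.exp ‖a‖ := by
    intro y hy
    refine (norm_exp_le' y).trans ?_
    have := Real.exp_le_exp.2 hy
    gcongr
  have hs1 : ‖s • (a + b)‖ ≤ ‖a + b‖ := by
    rw [norm_smul, Real.norm_eq_abs, abs_of_nonneg h0]
    nth_rewrite 2 [← one_mul ‖a + b‖]
    gcongr
  have hs2 : ‖-s • a‖ ≤ ‖a‖ := by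
    rw [neg_smul, norm_neg, norm_smul, Real.norm_eq_abs, abs_of_nonneg h0]
    nth_rewrite 2 [← one_mul ‖a‖]
    gcongr
  calc ‖FF a b s‖ ≤ ‖exp (s • (a + b))‖ * ‖exp (-s • a)‖ := norm_mul_le _ _
    _ ≤ (max ‖(1 : 𝒜)‖ 1 * Real.exp ‖a + b‖) * (max ‖(1 : 𝒜)‖ 1 * Real.exp ‖a‖) :=
        mul_le_mul (key _ hs1) (key2 _ hs2) (norm_nonneg _) (by positivity)
    _ = CC a b := rfl

set_option maxHeartbeats 1000000 in
lemma remainder (a b : 𝒜) (N : ℕ) :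
    ∀ s ∈ Set.Icc (0:ℝ) 1,
      ‖FF a b s - ∑ n ∈ Finset.range N, HH a b n s‖ ≤ CC a b * (MM a b * s) ^ N / N ! := by
  induction N with
  | zero =>
    intro s hs
    simpa using norm_FF_le a b hs.1 hs.2
  | succ N ih =>
    intro s hs
    have hid : FF a b s - ∑ n ∈ Finset.range (N+1), HH a b n s =
        ∫ u in (0:ℝ)..s, (FF a b u - ∑ n ∈ Finset.range N, HH a b n u) * BB a b u := by
      have e1 : ∑ n ∈ Finset.range (N+1), HH a b n s =
          (∑ n ∈ Finset.range N, HH a b (n+1) s) + 1 := by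
        rw [Finset.sum_range_succ']; rfl
      have e2 : ∀ n, HH a b (n+1) s = ∫ u in (0:ℝ)..s, HH a b n u * BB a b u := fun n => rfl
      have hint : ∀ n ∈ Finset.range N,
          IntervalIntegrable (fun u => HH a b n u * BB a b u) volume 0 s :=
        fun n _ => ((continuous_HH a b n).mul (continuous_BB a b)).intervalIntegrable 0 s
      have e3 : ∑ n ∈ Finset.range N, HH a b (n+1) s =
          ∫ u in (0:ℝ)..s, ∑ n ∈ Finset.range N, HH a b n u * BB a b u := by
        simp only [e2]
        rw [intervalIntegral.integral_finset_sum hint]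
      rw [FF_eq a b hs.1, e1, e3]
      have habel : ∀ X Y : 𝒜, (1 + X) - (Y + 1) = X - Y := fun X Y => by abel
      rw [habel]
      rw [← intervalIntegral.integral_sub (f := fun u => FF a b u * BB a b u)
          (g := fun u => ∑ n ∈ Finset.range N, HH a b n u * BB a b u)
        (((continuous_FF a b).mul (continuous_BB a b)).intervalIntegrable 0 s)
        ((continuous_finset_sum _ fun n _ =>
          (continuous_HH a b n).mul (continuous_BB a b)).intervalIntegrable 0 s)]
      refine intervalIntegral.integral_congr fun u _ => ?_
      show FF a b u * BB a b u - ∑ n ∈ Finset.range N, HH a b n u * BB a b u = _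
      rw [sub_mul, Finset.sum_mul]
    rw [hid]
    refine key_est a b (CC_nonneg a b) N ih ?_ hs
    exact (continuous_FF a b).sub (continuous_finset_sum _ fun n _ => continuous_HH a b n)

lemma summable_norm_HH (a b : 𝒜) : Summable fun n => ‖HH a b n 1‖ := by
  refine Summable.of_nonneg_of_le (fun n => norm_nonneg _) (fun n => ?_)
    ((Real.summable_pow_div_factorial (MM a b)).mul_left ‖(1:𝒜)‖)
  have := norm_HH_le a b n 1 ⟨zero_le_one, le_refl 1⟩
  simpa [mul_one, mul_div_assoc] using this

lemma tendsto_partial (a b : 𝒜) :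
    Filter.Tendsto (fun N => ∑ n ∈ Finset.range N, HH a b n 1) Filter.atTop
      (nhds (FF a b 1)) := by
  have h1 : ∀ N, ‖FF a b 1 - ∑ n ∈ Finset.range N, HH a b n 1‖ ≤ CC a b * (MM a b ^ N / N !) := by
    intro N
    have := remainder a b N 1 ⟨zero_le_one, le_refl 1⟩
    simpa [mul_one, mul_div_assoc] using this
  have h2 : Filter.Tendsto (fun N : ℕ => CC a b * (MM a b ^ N / N !)) Filter.atTop (nhds 0) := by
    have := ((Real.summable_pow_div_factorial (MM a b)).mul_left (CC a b)).tendsto_atTop_zero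
    exact this
  have h3 : Filter.Tendsto (fun N => FF a b 1 - ∑ n ∈ Finset.range N, HH a b n 1)
      Filter.atTop (nhds 0) := squeeze_zero_norm h1 h2
  have h4 := (tendsto_const_nhds (x := FF a b 1) (f := Filter.atTop (α := ℕ))).sub h3
  simpa using h4

lemma tsum_HH_eq (a b : 𝒜) : ∑' n, HH a b n 1 = FF a b 1 := by
  have hs : Summable fun n => HH a b n 1 := (summable_norm_HH a b).of_norm
  exact tendsto_nhds_unique hs.hasSum.tendsto_sum_nat (tendsto_partial a b)

lemma measurableSet_SS (n : ℕ) (s : ℝ) : MeasurableSet (SS n s) :=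
  (isClosed_SS n s).measurableSet

lemma mem_SS_snoc (n : ℕ) (s u : ℝ) (t : Fin n → ℝ) :
    (Fin.snoc t u ∈ SS (n+1) s) ↔ (u ∈ Set.Icc (0:ℝ) s ∧ t ∈ SS n u) := by
  constructor
  · rintro ⟨hmono, hb⟩
    have hu := hb (Fin.last n)
    rw [Fin.snoc_last] at hu
    refine ⟨hu, ?_, ?_⟩
    · intro i j hij
      have h := hmono (Fin.castSucc_le_castSucc_iff.2 hij)
      simpa [Fin.snoc_castSucc] using h
    · intro i
      have h1 := hb (Fin.castSucc i)
      rw [Fin.snoc_castSucc] at h1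
      have h2 := hmono (Fin.castSucc_lt_last i).le
      rw [Fin.snoc_castSucc, Fin.snoc_last] at h2
      exact ⟨h1.1, h2⟩
  · rintro ⟨⟨hu0, hus⟩, hmono, hb⟩
    constructor
    · intro i j hij
      rcases Fin.eq_castSucc_or_eq_last j with ⟨j', rfl⟩ | rfl
      · rcases Fin.eq_castSucc_or_eq_last i with ⟨i', rfl⟩ | rfl
        · rw [Fin.snoc_castSucc, Fin.snoc_castSucc]
          exact hmono (Fin.castSucc_le_castSucc_iff.1 hij)
        · exact absurd hij (not_le.2 (Fin.castSucc_lt_last j'))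
      · rw [Fin.snoc_last]
        rcases Fin.eq_castSucc_or_eq_last i with ⟨i', rfl⟩ | rfl
        · rw [Fin.snoc_castSucc]; exact (hb i').2
        · rw [Fin.snoc_last]
    · intro i
      rcases Fin.eq_castSucc_or_eq_last i with ⟨i', rfl⟩ | rfl
      · rw [Fin.snoc_castSucc]; exact ⟨(hb i').1, (hb i').2.trans hus⟩
      · rw [Fin.snoc_last]; exact ⟨hu0, hus⟩

lemma ff_snoc (a b : 𝒜) (n : ℕ) (u : ℝ) (t : Fin n → ℝ) :
    ff a b (n+1) (Fin.snoc t u) = ff a b n t * BB a b u := by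
  rw [ff, List.ofFn_succ', List.prod_concat, ff]
  congr 2
  · exact congrArg _ (funext fun i => by rw [Fin.snoc_castSucc])
  · rw [Fin.snoc_last]

set_option maxHeartbeats 1000000 in
lemma GG_succ (a b : 𝒜) (n : ℕ) {s : ℝ} (hs : 0 ≤ s) :
    GG a b (n+1) s = ∫ u in (0:ℝ)..s, GG a b n u * BB a b u := by
  set e := MeasurableEquiv.piFinSuccAbove (fun _ : Fin (n+1) => ℝ) (Fin.last n) with he
  set I : (Fin (n+1) → ℝ) → 𝒜 := (SS (n+1) s).indicator (ff a b (n+1)) with hI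
  have hmeas := measurableSet_SS (n+1) s
  have hint : Integrable I volume := by
    rw [hI, integrable_indicator_iff hmeas]
    exact integrableOn_ff a b (n+1) s
  have h1 : GG a b (n+1) s = ∫ t, I t := (integral_indicator hmeas).symm
  have hmp : MeasurePreserving e.symm volume volume :=
    (volume_preserving_piFinSuccAbove (fun _ : Fin (n+1) => ℝ) (Fin.last n)).symm _
  have h2 : ∫ t, I t = ∫ p : ℝ × (Fin n → ℝ), I (e.symm p) :=
    (hmp.integral_comp (MeasurableEquiv.measurableEmbedding _) I).symm
  have hsymm : ∀ (u : ℝ) (t : Fin n → ℝ), e.symm (u, t) = Fin.snoc t u := by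
    intro u t
    rw [he]
    rw [MeasurableEquiv.piFinSuccAbove_symm_apply]
    simp [Fin.insertNthEquiv]
  have hIsymm : ∀ (u : ℝ) (t : Fin n → ℝ),
      I (e.symm (u, t)) =
        (Set.Icc (0:ℝ) s).indicator
          (fun u' => (SS n u').indicator (fun t' => ff a b n t' * BB a b u') t) u := by
    intro u t
    rw [hsymm, hI]
    by_cases hu : u ∈ Set.Icc (0:ℝ) s
    · rw [Set.indicator_of_mem hu]
      by_cases ht : t ∈ SS n u
      · rw [Set.indicator_of_mem ((mem_SS_snoc n s u t).2 ⟨hu, ht⟩), Set.indicator_of_mem ht,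
          ff_snoc]
      · rw [Set.indicator_of_notMem, Set.indicator_of_notMem ht]
        intro hmem
        exact ht ((mem_SS_snoc n s u t).1 hmem).2
    · rw [Set.indicator_of_notMem hu, Set.indicator_of_notMem]
      intro hmem
      exact hu ((mem_SS_snoc n s u t).1 hmem).1
  have hint2 : Integrable (fun p : ℝ × (Fin n → ℝ) => I (e.symm p)) (volume.prod volume) := by
    rw [← Measure.volume_eq_prod]
    exact (hmp.integrable_comp_emb (MeasurableEquiv.measurableEmbedding _)).2 hint
  have h3 : (∫ p : ℝ × (Fin n → ℝ), I (e.symm p)) =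
      ∫ u : ℝ, ∫ t : Fin n → ℝ, I (e.symm (u, t)) := by
    rw [Measure.volume_eq_prod]
    exact integral_prod _ hint2
  have h4 : ∀ u : ℝ, (∫ t : Fin n → ℝ, I (e.symm (u, t))) =
      (Set.Icc (0:ℝ) s).indicator (fun u' => GG a b n u' * BB a b u') u := by
    intro u
    simp only [hIsymm]
    by_cases hu : u ∈ Set.Icc (0:ℝ) s
    · simp only [Set.indicator_of_mem hu]
      rw [integral_indicator (measurableSet_SS n u)]
      have hL := ContinuousLinearMap.integral_comp_comm
        ((ContinuousLinearMap.mul ℝ 𝒜).flip (BB a b u)) (integrableOn_ff a b n u)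
      simpa [GG] using hL
    · simp only [Set.indicator_of_notMem hu, integral_zero]
  rw [h1, h2, h3]
  simp only [h4]
  rw [integral_indicator measurableSet_Icc, integral_Icc_eq_integral_Ioc,
    ← intervalIntegral.integral_of_le hs]

lemma GG_eq_HH (a b : 𝒜) : ∀ n : ℕ, ∀ s : ℝ, 0 ≤ s → GG a b n s = HH a b n s := by
  intro n
  induction n with
  | zero => intro s _; rw [GG_zero]; rfl
  | succ n ih =>
    intro s hs
    rw [GG_succ a b n hs]
    show _ = ∫ u in (0:ℝ)..s, HH a b n u * BB a b u
    refine intervalIntegral.integral_congr ?_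
    intro u hu
    rw [Set.uIcc_of_le hs] at hu
    show GG a b n u * BB a b u = HH a b n u * BB a b u
    rw [ih u hu.1]

end Chunk4

theorem stmt14 {𝒜 : Type*} [NormedRing 𝒜] [NormedAlgebra ℂ 𝒜] [CompleteSpace 𝒜]
    (a b : 𝒜) :
    Summable (fun n : ℕ =>
      ‖∫ t in {t : Fin n → ℝ | Monotone t ∧ ∀ i, t i ∈ Set.Icc (0 : ℝ) 1},
        (List.ofFn fun i : Fin n =>
          NormedSpace.exp ((t i) • a) * b * NormedSpace.exp (-(t i) • a)).prod‖) ∧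
    NormedSpace.exp (a + b) * NormedSpace.exp (-a) =
      ∑' n : ℕ,
        ∫ t in {t : Fin n → ℝ | Monotone t ∧ ∀ i, t i ∈ Set.Icc (0 : ℝ) 1},
          (List.ofFn fun i : Fin n =>
            NormedSpace.exp ((t i) • a) * b * NormedSpace.exp (-(t i) • a)).prod := by
  have hGH : ∀ n : ℕ, GG a b n 1 = HH a b n 1 := fun n => GG_eq_HH a b n 1 zero_le_one
  have hshow : ∀ n : ℕ,
      (∫ t in {t : Fin n → ℝ | Monotone t ∧ ∀ i, t i ∈ Set.Icc (0 : ℝ) 1},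
        (List.ofFn fun i : Fin n =>
          NormedSpace.exp ((t i) • a) * b * NormedSpace.exp (-(t i) • a)).prod)
      = GG a b n 1 := fun n => rfl
  constructor
  · simp only [hshow, hGH]
    exact summable_norm_HH a b
  · simp only [hshow, hGH]
    rw [tsum_HH_eq a b]
    rw [FF]
    simp [one_smul, neg_smul]
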